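/- arXiv:1208.0570 — 3 statements merged into one kernel-verified Lean document; each statement's English description precedes it below -/
import Mathlib

section
/- Suppose moreover that there is a constant c > 0 such that aᵀG a ≥ c Σ_{φ∈Φ} a_φ² for every a ∈ ℝ^Φ, and that |b_φ − b̄_φ| ≤ d_φ for every φ ∈ Φ. Then for every a ∈ ℝ^Φ one has ‖f_â − f*‖_T² ≤ 3 ‖f_a − f*‖_T² + 32 c⁻¹ Σ_{φ∈S(a)} d_φ². In particular, with the absolute constant C = 32, ‖f_â − f*‖_T² ≤ C · inf_{a∈ℝ^Φ} { ‖f_a − f*‖_T² + c⁻¹ Σ_{φ∈S(a)} d_φ² }. (Abstract, deterministic form of the paper's Theorem 1.) -/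
open Finset

/-- Abstract deterministic oracle inequality (Theorem 1): if the Gram matrix
satisfies `aᵀ G a ≥ c ∑ a_φ²` and `|b_φ − b̄_φ| ≤ d_φ`, then any
`ℓ¹`-penalized minimizer `â` satisfies, for every `a`,
`‖f_â − f*‖_T² ≤ 3 ‖f_a − f*‖_T² + 32 c⁻¹ ∑_{φ ∈ S(a)} d_φ²`,
and in particular, with `C = 32`,
`‖f_â − f*‖_T² ≤ C inf_a { ‖f_a − f*‖_T² + c⁻¹ ∑_{φ ∈ S(a)} d_φ² }`. -/
theorem stmt_0 {Φ : Type*} [Fintype Φ] {H : Type*} [AddCommGroup H] [Module ℝ H]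
    (B : H → H → ℝ)
    (hB_symm : ∀ f g, B f g = B g f)
    (hB_add_left : ∀ f g h, B (f + g) h = B f h + B g h)
    (hB_smul_left : ∀ (c : ℝ) (f g : H), B (c • f) g = c * B f g)
    (hB_psd : ∀ f, 0 ≤ B f f)
    (dict : Φ → H) (fstar : H) (b : Φ → ℝ) (d : Φ → ℝ) (hd : ∀ φ, 0 ≤ d φ)
    (ahat : Φ → ℝ)
    (hahat : ∀ a : Φ → ℝ,
      -2 * (∑ φ, ahat φ * b φ)
          + (∑ φ, ∑ ρ, ahat φ * ahat ρ * B (dict φ) (dict ρ))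
          + 2 * (∑ φ, d φ * |ahat φ|)
        ≤ -2 * (∑ φ, a φ * b φ)
          + (∑ φ, ∑ ρ, a φ * a ρ * B (dict φ) (dict ρ))
          + 2 * (∑ φ, d φ * |a φ|))
    (c : ℝ) (hc : 0 < c)
    (hG : ∀ a : Φ → ℝ,
      c * ∑ φ, (a φ) ^ 2 ≤ ∑ φ, ∑ ρ, a φ * a ρ * B (dict φ) (dict ρ))
    (hb : ∀ φ, |b φ - B (dict φ) fstar| ≤ d φ) :
    (∀ a : Φ → ℝ,
      B ((∑ φ, ahat φ • dict φ) - fstar) ((∑ φ, ahat φ • dict φ) - fstar)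
        ≤ 3 * B ((∑ φ, a φ • dict φ) - fstar) ((∑ φ, a φ • dict φ) - fstar)
          + 32 * c⁻¹ * ∑ φ ∈ univ.filter (fun φ => a φ ≠ 0), (d φ) ^ 2)
    ∧ B ((∑ φ, ahat φ • dict φ) - fstar) ((∑ φ, ahat φ • dict φ) - fstar)
        ≤ 32 * ⨅ a : Φ → ℝ,
            (B ((∑ φ, a φ • dict φ) - fstar) ((∑ φ, a φ • dict φ) - fstar)
              + c⁻¹ * ∑ φ ∈ univ.filter (fun φ => a φ ≠ 0), (d φ) ^ 2) := by
  classical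
  -- basic bilinearity facts
  have hzero : ∀ g : H, B 0 g = 0 := by
    intro g
    have := hB_smul_left 0 0 g
    simpa using this
  have hneg_left : ∀ x z : H, B (-x) z = -B x z := by
    intro x z
    have := hB_smul_left (-1) x z
    simpa using this
  have hsub_left : ∀ x y z : H, B (x - y) z = B x z - B y z := by
    intro x y z
    rw [sub_eq_add_neg, hB_add_left, hneg_left]; ring
  have hadd_right : ∀ x y z : H, B x (y + z) = B x y + B x z := by
    intro x y z
    rw [hB_symm, hB_add_left, hB_symm y x, hB_symm z x]
  have hsub_right : ∀ x y z : H, B x (y - z) = B x y - B x z := by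
    intro x y z
    rw [hB_symm, hsub_left, hB_symm y x, hB_symm z x]
  have hsum_left : ∀ (s : Finset Φ) (a : Φ → ℝ) (g : H),
      B (∑ φ ∈ s, a φ • dict φ) g = ∑ φ ∈ s, a φ * B (dict φ) g := by
    intro s a g
    induction s using Finset.induction_on with
    | empty => simpa using hzero g
    | insert _ _ h ih =>
        rw [Finset.sum_insert h, Finset.sum_insert h, hB_add_left, hB_smul_left, ih]
  have hquad : ∀ a : Φ → ℝ,
      B (∑ φ, a φ • dict φ) (∑ φ, a φ • dict φ)
        = ∑ φ, ∑ ρ, a φ * a ρ * B (dict φ) (dict ρ) := by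
    intro a
    rw [hsum_left]
    refine Finset.sum_congr rfl fun φ _ => ?_
    rw [hB_symm (dict φ), hsum_left, Finset.mul_sum]
    refine Finset.sum_congr rfl fun ρ _ => ?_
    rw [hB_symm (dict ρ)]
    ring
  have expand : ∀ w : H,
      B (w - fstar) (w - fstar) = B w w - 2 * B w fstar + B fstar fstar := by
    intro w
    rw [hsub_left, hsub_right, hsub_right, hB_symm fstar w]; ring
  have key : ∀ a : Φ → ℝ,
      B ((∑ φ, ahat φ • dict φ) - fstar) ((∑ φ, ahat φ • dict φ) - fstar)
        ≤ 3 * B ((∑ φ, a φ • dict φ) - fstar) ((∑ φ, a φ • dict φ) - fstar)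
          + 32 * c⁻¹ * ∑ φ ∈ univ.filter (fun φ => a φ ≠ 0), (d φ) ^ 2 := by
    intro a
    set X := B ((∑ φ, ahat φ • dict φ) - fstar) ((∑ φ, ahat φ • dict φ) - fstar) with hXdef
    set Y := B ((∑ φ, a φ • dict φ) - fstar) ((∑ φ, a φ • dict φ) - fstar) with hYdef
    set D := ∑ φ ∈ univ.filter (fun φ => a φ ≠ 0), (d φ) ^ 2 with hDdef
    set k := ∑ φ ∈ univ.filter (fun φ => a φ ≠ 0), d φ * |ahat φ - a φ| with hkdef
    have hX0 : 0 ≤ X := hB_psd _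
    have hY0 : 0 ≤ Y := hB_psd _
    have hD0 : 0 ≤ D := Finset.sum_nonneg fun φ _ => sq_nonneg _
    have hk0 : 0 ≤ k := Finset.sum_nonneg fun φ _ =>
      mul_nonneg (hd φ) (abs_nonneg _)
    -- Step 1 : basic inequality from minimality
    have step1 : X - Y ≤ ∑ φ, 2 * ((ahat φ - a φ) * (b φ - B (dict φ) fstar)
        + d φ * (|a φ| - |ahat φ|)) := by
      have h1 := hahat a
      rw [← hquad ahat, ← hquad a] at h1
      have e1 : X = B (∑ φ, ahat φ • dict φ) (∑ φ, ahat φ • dict φ)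
          - 2 * (∑ φ, ahat φ * B (dict φ) fstar) + B fstar fstar := by
        rw [hXdef, expand, hsum_left univ ahat fstar]
      have e2 : Y = B (∑ φ, a φ • dict φ) (∑ φ, a φ • dict φ)
          - 2 * (∑ φ, a φ * B (dict φ) fstar) + B fstar fstar := by
        rw [hYdef, expand, hsum_left univ a fstar]
      have e3 : ∑ φ, 2 * ((ahat φ - a φ) * (b φ - B (dict φ) fstar)
            + d φ * (|a φ| - |ahat φ|))
          = 2 * (∑ φ, ahat φ * b φ) - 2 * (∑ φ, a φ * b φ)
            - 2 * (∑ φ, ahat φ * B (dict φ) fstar)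
            + 2 * (∑ φ, a φ * B (dict φ) fstar)
            + 2 * (∑ φ, d φ * |a φ|) - 2 * (∑ φ, d φ * |ahat φ|) := by
        simp only [Finset.mul_sum, ← Finset.sum_sub_distrib, ← Finset.sum_add_distrib]
        exact Finset.sum_congr rfl fun φ _ => by ring
      linarith
    -- Step 2 : pointwise bound
    have step2 : ∀ φ ∈ (univ : Finset Φ),
        2 * ((ahat φ - a φ) * (b φ - B (dict φ) fstar) + d φ * (|a φ| - |ahat φ|))
          ≤ (if a φ ≠ 0 then 4 * (d φ * |ahat φ - a φ|) else 0) := by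
      intro φ _
      have h1 : (ahat φ - a φ) * (b φ - B (dict φ) fstar) ≤ d φ * |ahat φ - a φ| := by
        calc (ahat φ - a φ) * (b φ - B (dict φ) fstar)
            ≤ |(ahat φ - a φ) * (b φ - B (dict φ) fstar)| := le_abs_self _
          _ = |ahat φ - a φ| * |b φ - B (dict φ) fstar| := abs_mul _ _
          _ ≤ |ahat φ - a φ| * d φ :=
              mul_le_mul_of_nonneg_left (hb φ) (abs_nonneg _)
          _ = d φ * |ahat φ - a φ| := mul_comm _ _
      by_cases h : a φ = 0
      · simp only [h, ne_eq, not_true_eq_false, if_false]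
        rw [h] at h1
        simp only [h, sub_zero, abs_zero] at h1 ⊢
        nlinarith [hd φ, abs_nonneg (ahat φ)]
      · simp only [h, ne_eq, not_false_eq_true, if_true]
        have h2 : |a φ| - |ahat φ| ≤ |ahat φ - a φ| := by
          have := abs_sub_abs_le_abs_sub (a φ) (ahat φ)
          rw [abs_sub_comm (a φ) (ahat φ)] at this
          linarith
        have h3 : d φ * (|a φ| - |ahat φ|) ≤ d φ * |ahat φ - a φ| :=
          mul_le_mul_of_nonneg_left h2 (hd φ)
        linarith
    have step3 : X - Y ≤ 4 * k := by
      have h4 : ∑ φ, (if a φ ≠ 0 then 4 * (d φ * |ahat φ - a φ|) else 0) = 4 * k := by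
        rw [hkdef, Finset.mul_sum, Finset.sum_filter]
      calc X - Y ≤ _ := step1
        _ ≤ ∑ φ, (if a φ ≠ 0 then 4 * (d φ * |ahat φ - a φ|) else 0) :=
            Finset.sum_le_sum step2
        _ = 4 * k := h4
    -- Cauchy-Schwarz
    have hcs : k ^ 2 ≤ D * ∑ φ, (ahat φ - a φ) ^ 2 := by
      have h5 := Finset.sum_mul_sq_le_sq_mul_sq (univ.filter (fun φ => a φ ≠ 0))
        d (fun φ => |ahat φ - a φ|)
      simp only [sq_abs] at h5
      have h6 : ∑ φ ∈ univ.filter (fun φ => a φ ≠ 0), (ahat φ - a φ) ^ 2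
          ≤ ∑ φ, (ahat φ - a φ) ^ 2 :=
        Finset.sum_le_sum_of_subset_of_nonneg (Finset.filter_subset _ _)
          (fun φ _ _ => sq_nonneg _)
      calc k ^ 2 ≤ D * ∑ φ ∈ univ.filter (fun φ => a φ ≠ 0), (ahat φ - a φ) ^ 2 := h5
        _ ≤ D * ∑ φ, (ahat φ - a φ) ^ 2 := by
            exact mul_le_mul_of_nonneg_left h6 hD0
    -- Gram lower bound and parallelogram
    have hGram : c * ∑ φ, (ahat φ - a φ) ^ 2 ≤ 2 * X + 2 * Y := by
      have h7 := hG (fun φ => ahat φ - a φ)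
      rw [← hquad (fun φ => ahat φ - a φ)] at h7
      have hFδ : (∑ φ, (ahat φ - a φ) • dict φ)
          = (∑ φ, ahat φ • dict φ) - (∑ φ, a φ • dict φ) := by
        simp [sub_smul, Finset.sum_sub_distrib]
      rw [hFδ] at h7
      set u := (∑ φ, ahat φ • dict φ) - fstar with hu
      set v := (∑ φ, a φ • dict φ) - fstar with hv
      have huv : (∑ φ, ahat φ • dict φ) - (∑ φ, a φ • dict φ) = u - v := by
        rw [hu, hv]; abel
      rw [huv] at h7
      have h8 := hB_psd (u + v)
      have e4 : B (u + v) (u + v) = B u u + 2 * B u v + B v v := by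
        rw [hB_add_left u v (u + v), hadd_right u u v, hadd_right v u v,
          hB_symm v u]; ring
      have e5 : B (u - v) (u - v) = B u u - 2 * B u v + B v v := by
        rw [hsub_left u v (u - v), hsub_right u u v, hsub_right v u v,
          hB_symm v u]; ring
      have : B (u - v) (u - v) ≤ 2 * X + 2 * Y := by
        rw [hXdef, hYdef]; rw [e5]; rw [e4] at h8; linarith
      linarith
    -- combine
    have hck : c * k ^ 2 ≤ 2 * D * X + 2 * D * Y := by
      have h9 : c * k ^ 2 ≤ c * (D * ∑ φ, (ahat φ - a φ) ^ 2) :=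
        mul_le_mul_of_nonneg_left hcs hc.le
      have h10 : D * (c * ∑ φ, (ahat φ - a φ) ^ 2) ≤ D * (2 * X + 2 * Y) :=
        mul_le_mul_of_nonneg_left hGram hD0
      nlinarith
    have hfin : c * X ≤ 3 * (c * Y) + 32 * D := by
      rcases le_or_gt (X - Y) 0 with ht | ht
      · nlinarith
      · have h16 : (X - Y) ^ 2 ≤ 16 * k ^ 2 := by nlinarith [step3, ht.le, hk0]
        have hsq : c * (X - Y) ^ 2 ≤ 32 * D * X + 32 * D * Y := by
          nlinarith [mul_le_mul_of_nonneg_left h16 hc.le, hck]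
        nlinarith [hsq, ht, hY0, hD0, hc, mul_nonneg hc.le (sq_nonneg Y),
          mul_nonneg hD0 hY0, mul_nonneg hY0 ht.le]
    have hcinv : (0:ℝ) < c⁻¹ := inv_pos.mpr hc
    have h11 := mul_le_mul_of_nonneg_left hfin hcinv.le
    have h12 : c⁻¹ * c = 1 := inv_mul_cancel₀ hc.ne'
    nlinarith [h11, h12]
  refine ⟨key, ?_⟩
  have h2 : B ((∑ φ, ahat φ • dict φ) - fstar) ((∑ φ, ahat φ • dict φ) - fstar) / 32
      ≤ ⨅ a : Φ → ℝ,
          (B ((∑ φ, a φ • dict φ) - fstar) ((∑ φ, a φ • dict φ) - fstar)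
            + c⁻¹ * ∑ φ ∈ univ.filter (fun φ => a φ ≠ 0), (d φ) ^ 2) := by
    apply le_ciInf
    intro a
    have h3 := key a
    have hY0 : 0 ≤ B ((∑ φ, a φ • dict φ) - fstar) ((∑ φ, a φ • dict φ) - fstar) :=
      hB_psd _
    linarith
  linarith
end

section
/- Assume only that |b_φ − b̄_φ| ≤ d_φ for every φ ∈ Φ (no condition on the Gram matrix G). Then for every a ∈ ℝ^Φ, ‖f_â − f*‖_T² ≤ ‖f_a − f*‖_T² + 4 Σ_{φ∈S(a)} d_φ |a_φ − â_φ|. (The 'basic inequality' established in the proof of the paper's Theorem 1.) -/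
open Finset

/-- Basic Lasso inequality: with `B` a symmetric positive semidefinite bilinear
form with associated squared seminorm `‖f‖_T² = B f f`, dictionary `dict`,
target `fstar`, `b̄_φ = B (dict φ) fstar`, weights `d_φ ≥ 0` and `b_φ` satisfying
`|b_φ − b̄_φ| ≤ d_φ`, any minimizer `â` of the `ℓ¹`-penalized criterion satisfies,
for every `a`,
`‖f_â − f*‖_T² ≤ ‖f_a − f*‖_T² + 4 ∑_{φ ∈ S(a)} d_φ |a_φ − â_φ|`. -/
theorem stmt_1 {Φ : Type*} [Fintype Φ] {H : Type*} [AddCommGroup H] [Module ℝ H]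
    (B : H → H → ℝ)
    (hB_symm : ∀ f g, B f g = B g f)
    (hB_add_left : ∀ f g h, B (f + g) h = B f h + B g h)
    (hB_smul_left : ∀ (c : ℝ) (f g : H), B (c • f) g = c * B f g)
    (hB_psd : ∀ f, 0 ≤ B f f)
    (dict : Φ → H) (fstar : H) (b : Φ → ℝ) (d : Φ → ℝ) (hd : ∀ φ, 0 ≤ d φ)
    (ahat : Φ → ℝ)
    (hahat : ∀ a : Φ → ℝ,
      -2 * (∑ φ, ahat φ * b φ)
          + (∑ φ, ∑ ρ, ahat φ * ahat ρ * B (dict φ) (dict ρ))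
          + 2 * (∑ φ, d φ * |ahat φ|)
        ≤ -2 * (∑ φ, a φ * b φ)
          + (∑ φ, ∑ ρ, a φ * a ρ * B (dict φ) (dict ρ))
          + 2 * (∑ φ, d φ * |a φ|))
    (hb : ∀ φ, |b φ - B (dict φ) fstar| ≤ d φ) :
    ∀ a : Φ → ℝ,
      B ((∑ φ, ahat φ • dict φ) - fstar) ((∑ φ, ahat φ • dict φ) - fstar)
        ≤ B ((∑ φ, a φ • dict φ) - fstar) ((∑ φ, a φ • dict φ) - fstar)
          + 4 * ∑ φ ∈ univ.filter (fun φ => a φ ≠ 0), d φ * |a φ - ahat φ| := by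
  classical
  intro a
  -- basic bilinearity facts
  have hzero : ∀ g, B 0 g = 0 := by
    intro g
    have h := hB_smul_left 0 (0 : H) g
    simpa using h
  have hsub : ∀ f g h, B (f - g) h = B f h - B g h := by
    intro f g h
    have h1 : f - g = f + (-1 : ℝ) • g := by
      simp [sub_eq_add_neg]
    rw [h1, hB_add_left, hB_smul_left]; ring
  have hsum : ∀ (c : Φ → ℝ) (g : H),
      B (∑ φ, c φ • dict φ) g = ∑ φ, c φ * B (dict φ) g := by
    intro c g
    induction (univ : Finset Φ) using Finset.induction_on with
    | empty => simp [hzero]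
    | insert _ _ h ih =>
        rw [Finset.sum_insert h, hB_add_left, hB_smul_left, Finset.sum_insert h, ih]
  -- expansion of the squared seminorm
  have expand : ∀ c : Φ → ℝ,
      B ((∑ φ, c φ • dict φ) - fstar) ((∑ φ, c φ • dict φ) - fstar)
        = (∑ φ, ∑ ρ, c φ * c ρ * B (dict φ) (dict ρ))
          - 2 * (∑ φ, c φ * B (dict φ) fstar) + B fstar fstar := by
    intro c
    set X : H := ∑ φ, c φ • dict φ with hX
    have h1 : B (X - fstar) (X - fstar)
        = B X X - B X fstar - B X fstar + B fstar fstar := by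
      rw [hsub]
      rw [hB_symm X (X - fstar), hB_symm fstar (X - fstar), hsub, hsub]
      rw [hB_symm fstar X]
      ring
    have h2 : B X fstar = ∑ φ, c φ * B (dict φ) fstar := hsum c fstar
    have h3 : B X X = ∑ φ, ∑ ρ, c φ * c ρ * B (dict φ) (dict ρ) := by
      rw [hsum c X]
      refine Finset.sum_congr rfl (fun φ _ => ?_)
      rw [hB_symm (dict φ) X, hsum c (dict φ), Finset.mul_sum]
      refine Finset.sum_congr rfl (fun ρ _ => ?_)
      rw [hB_symm (dict ρ) (dict φ)]; ring
    rw [h1, h2, h3]; ring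
  -- abbreviations
  set G2 : (Φ → ℝ) → ℝ := fun c => ∑ φ, ∑ ρ, c φ * c ρ * B (dict φ) (dict ρ) with hG2
  set S1 : (Φ → ℝ) → ℝ := fun c => ∑ φ, c φ * B (dict φ) fstar with hS1
  set T : (Φ → ℝ) → ℝ := fun c => ∑ φ, c φ * b φ with hT
  set P : (Φ → ℝ) → ℝ := fun c => ∑ φ, d φ * |c φ| with hP
  have hkey := hahat a
  -- the per-term function
  set t : Φ → ℝ := fun φ =>
    2 * (ahat φ - a φ) * (b φ - B (dict φ) fstar) + 2 * d φ * (|a φ| - |ahat φ|)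
    with ht
  have hsum_t : ∑ φ, t φ
      = 2 * T ahat - 2 * T a + 2 * P a - 2 * P ahat - 2 * S1 ahat + 2 * S1 a := by
    simp only [ht, hT, hP, hS1, Finset.mul_sum, ← Finset.sum_sub_distrib,
      ← Finset.sum_add_distrib]
    exact Finset.sum_congr rfl (fun φ _ => by ring)
  have hterm : ∀ φ, t φ ≤ if a φ ≠ 0 then 4 * (d φ * |a φ - ahat φ|) else 0 := by
    intro φ
    have habs : (ahat φ - a φ) * (b φ - B (dict φ) fstar)
        ≤ |a φ - ahat φ| * d φ := by
      calc (ahat φ - a φ) * (b φ - B (dict φ) fstar)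
          ≤ |(ahat φ - a φ) * (b φ - B (dict φ) fstar)| := le_abs_self _
        _ = |ahat φ - a φ| * |b φ - B (dict φ) fstar| := abs_mul _ _
        _ ≤ |ahat φ - a φ| * d φ :=
            mul_le_mul_of_nonneg_left (hb φ) (abs_nonneg _)
        _ = |a φ - ahat φ| * d φ := by rw [abs_sub_comm]
    by_cases h : a φ = 0
    · simp only [h, ne_eq, not_true_eq_false, if_false, ht]
      have : |a φ - ahat φ| = |ahat φ| := by rw [h, abs_sub_comm]; simp
      rw [this] at habs
      rw [h, sub_zero] at habs
      simp only [abs_zero, sub_zero]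
      nlinarith [habs]
    · simp only [h, ne_eq, not_false_eq_true, if_true, ht]
      have h2 : |a φ| - |ahat φ| ≤ |a φ - ahat φ| := abs_sub_abs_le_abs_sub _ _
      nlinarith [habs, hd φ]
  have hsum_le : ∑ φ, t φ
      ≤ ∑ φ ∈ univ.filter (fun φ => a φ ≠ 0), 4 * (d φ * |a φ - ahat φ|) := by
    rw [Finset.sum_filter]
    exact Finset.sum_le_sum (fun φ _ => hterm φ)
  have hR : ∑ φ ∈ univ.filter (fun φ => a φ ≠ 0), 4 * (d φ * |a φ - ahat φ|)
      = 4 * ∑ φ ∈ univ.filter (fun φ => a φ ≠ 0), d φ * |a φ - ahat φ| := by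
    rw [Finset.mul_sum]
  rw [expand ahat, expand a]
  have hkey' : G2 ahat - G2 a ≤ 2 * T ahat - 2 * T a + 2 * P a - 2 * P ahat := by
    simp only [hG2, hT, hP] at hkey ⊢
    linarith [hkey]
  have hfin : ∑ φ, t φ ≤ 4 * ∑ φ ∈ univ.filter (fun φ => a φ ≠ 0), d φ * |a φ - ahat φ| := by
    rw [← hR]; exact hsum_le
  linarith [hsum_t, hkey', hfin]
end

section
/- Suppose that for every deterministic u > 0 one has P( X ≥ √(2 u x) + B x / 3 and V ≤ u ) ≤ e^{−x}. Then for every ε > 0 and every pair of constants 0 < w ≤ v, P( X ≥ √(2 (1+ε) V x) + B x / 3 and w ≤ V ≤ v ) ≤ ( log(v/w)/log(1+ε) + 1 ) e^{−x}. (The peeling argument underlying the paper's Theorem 3, which replaces a deterministic variance bound by the random, observable quantity V inside the deviation bound.) -/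
open MeasureTheory
open scoped ENNReal

/-- Peeling argument (underlying Theorem 3): if for every deterministic `u > 0`
`P(X ≥ √(2 u x) + B x/3 ∧ V ≤ u) ≤ e^{−x}`, then for every `ε > 0` and
`0 < w ≤ v`,
`P(X ≥ √(2 (1+ε) V x) + B x/3 ∧ w ≤ V ≤ v) ≤ (log(v/w)/log(1+ε) + 1) e^{−x}`. -/
theorem stmt_2 {Ω : Type*} [MeasurableSpace Ω] (P : Measure Ω) [IsProbabilityMeasure P]
    (X V : Ω → ℝ) (hX : Measurable X) (hV : Measurable V)
    (x : ℝ) (hx : 0 < x) (B : ℝ) (hB : 0 ≤ B)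
    (h : ∀ u : ℝ, 0 < u →
      P {ω | Real.sqrt (2 * u * x) + B * x / 3 ≤ X ω ∧ V ω ≤ u}
        ≤ ENNReal.ofReal (Real.exp (-x))) :
    ∀ ε : ℝ, 0 < ε → ∀ w v : ℝ, 0 < w → w ≤ v →
      P {ω | Real.sqrt (2 * (1 + ε) * V ω * x) + B * x / 3 ≤ X ω
              ∧ w ≤ V ω ∧ V ω ≤ v}
        ≤ ENNReal.ofReal
            ((Real.log (v / w) / Real.log (1 + ε) + 1) * Real.exp (-x)) := by
  intro ε hε w v hw hwv
  have hb1 : 1 < 1 + ε := by linarith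
  have hb0 : (0:ℝ) < 1 + ε := by linarith
  have hlogb : 0 < Real.log (1 + ε) := Real.log_pos hb1
  set r := Real.log (v / w) / Real.log (1 + ε) with hr
  have hvw1 : 1 ≤ v / w := (le_div_iff₀ hw).2 (by linarith)
  have hr0 : 0 ≤ r := div_nonneg (Real.log_nonneg hvw1) hlogb.le
  set n := ⌊r⌋₊ with hn
  set A : ℕ → Set Ω := fun k =>
    {ω | Real.sqrt (2 * (w * (1 + ε) ^ (k + 1)) * x) + B * x / 3 ≤ X ω
         ∧ V ω ≤ w * (1 + ε) ^ (k + 1)} with hA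
  have hsub : {ω | Real.sqrt (2 * (1 + ε) * V ω * x) + B * x / 3 ≤ X ω
              ∧ w ≤ V ω ∧ V ω ≤ v} ⊆ ⋃ k ∈ Finset.range (n + 1), A k := by
    rintro ω ⟨hX1, hVw, hVv⟩
    have hVpos : 0 < V ω := lt_of_lt_of_le hw hVw
    set t := V ω / w with ht
    have ht1 : 1 ≤ t := (le_div_iff₀ hw).2 (by linarith)
    have ht0 : 0 < t := lt_of_lt_of_le one_pos ht1
    have hlt0 : 0 ≤ Real.log t := Real.log_nonneg ht1
    set k := ⌊Real.log t / Real.log (1 + ε)⌋₊ with hk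
    have hkn : k ≤ n := by
      apply Nat.floor_le_floor
      have hle : Real.log t ≤ Real.log (v / w) := by
        apply Real.log_le_log ht0
        rw [ht]; gcongr
      exact div_le_div_of_nonneg_right hle hlogb.le
    have hupper : V ω ≤ w * (1 + ε) ^ (k + 1) := by
      have h1 : Real.log t / Real.log (1 + ε) < k + 1 := Nat.lt_floor_add_one _
      have h2 : Real.log t < (k + 1 : ℕ) * Real.log (1 + ε) := by
        rw [div_lt_iff₀ hlogb] at h1
        push_cast
        linarith
      rw [← Real.log_pow] at h2
      have h3 : t < (1 + ε) ^ (k + 1) :=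
        (Real.log_lt_log_iff ht0 (by positivity)).1 h2
      rw [ht, div_lt_iff₀ hw] at h3
      linarith
    have hlower : w * (1 + ε) ^ (k + 1) ≤ (1 + ε) * V ω := by
      have h1 : (k : ℝ) ≤ Real.log t / Real.log (1 + ε) :=
        Nat.floor_le (div_nonneg hlt0 hlogb.le)
      have h2 : Real.log ((1 + ε) ^ k) ≤ Real.log t := by
        rw [Real.log_pow]
        rw [le_div_iff₀ hlogb] at h1
        linarith
      have h3 : (1 + ε) ^ k ≤ t :=
        (Real.log_le_log_iff (by positivity) ht0).1 h2
      rw [ht, le_div_iff₀ hw] at h3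
      calc w * (1 + ε) ^ (k + 1) = (1 + ε) * ((1 + ε) ^ k * w) := by ring
        _ ≤ (1 + ε) * V ω := by gcongr ?_ * ?_ <;> linarith
    have hkmem : k ∈ Finset.range (n + 1) := Finset.mem_range.2 (Nat.lt_succ_of_le hkn)
    refine Set.mem_biUnion hkmem ⟨le_trans ?_ hX1, hupper⟩
    have hsq : Real.sqrt (2 * (w * (1 + ε) ^ (k + 1)) * x)
        ≤ Real.sqrt (2 * (1 + ε) * V ω * x) := by
      apply Real.sqrt_le_sqrt
      nlinarith
    linarith
  calc P {ω | Real.sqrt (2 * (1 + ε) * V ω * x) + B * x / 3 ≤ X ω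
              ∧ w ≤ V ω ∧ V ω ≤ v}
      ≤ P (⋃ k ∈ Finset.range (n + 1), A k) := measure_mono hsub
    _ ≤ ∑ k ∈ Finset.range (n + 1), P (A k) := measure_biUnion_finset_le _ _
    _ ≤ ∑ k ∈ Finset.range (n + 1), ENNReal.ofReal (Real.exp (-x)) :=
        Finset.sum_le_sum fun k _ => h _ (by positivity)
    _ = ((n + 1 : ℕ) : ℝ≥0∞) * ENNReal.ofReal (Real.exp (-x)) := by
        rw [Finset.sum_const, Finset.card_range, nsmul_eq_mul]
    _ ≤ ENNReal.ofReal ((r + 1) * Real.exp (-x)) := by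
        rw [ENNReal.ofReal_mul (by positivity), ← ENNReal.ofReal_natCast (n + 1)]
        gcongr
        push_cast
        linarith [Nat.floor_le hr0]
end
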